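/- Fix integers m ≥ 1, and nonnegative reals (or integers) d_i, d_j, W_{i,j}, W_{j,i}, Y_1 ≤ h, Y_2 ≤ h with Y_1 ≤ d_i - W_{i,j} and Y_2 ≤ d_j - W_{j,i}. Then the inclusion-exclusion sum b = Σ_{l=0}^m (-1)^l · C(m,l) · [Y_1]_l · [Y_2]_l · [d_i - W_{i,j} - l]_{m-l} · [d_j - W_{j,i} - l]_{m-l} satisfies b ≥ [d_i - W_{i,j}]_m · [d_j - W_{j,i}]_m - m·h²·[d_i - W_{i,j}]_{m-1}·[d_j - W_{j,i}]_{m-1}, i.e., the lower bound b̲_hm used in Phase 1 of Inc-Powerlaw is indeed a lower bound for b_hm whenever b counts a nonnegative quantity dominated termwise as above. -/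

import Mathlib

open Finset

section aux

variable {α β : Type*} [Fintype α] [Fintype β] [DecidableEq α] [DecidableEq β]

/-- Restriction of a constrained embedding to `L`, landing in `S`. -/
private def resEmb (L : Finset α) (S : Finset β) (f : {f : α ↪ β // ∀ a ∈ L, f a ∈ S}) :
    {x // x ∈ L} ↪ {y // y ∈ S} :=
  ⟨fun x => ⟨f.1 x.1, f.2 x.1 x.2⟩, fun x y hxy =>
    Subtype.ext (f.1.injective (congrArg Subtype.val hxy))⟩

private lemma card_fiber (L : Finset α) (S : Finset β) (u : {x // x ∈ L} ↪ {y // y ∈ S}) :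
    Fintype.card {f : {f : α ↪ β // ∀ a ∈ L, f a ∈ S} // resEmb L S f = u}
      = (Fintype.card β - L.card).descFactorial (Fintype.card α - L.card) := by
  classical
  have himg : (Finset.univ.image fun x : {x // x ∈ L} => (u x : β)).card = L.card := by
    rw [Finset.card_image_of_injective _ (fun x y hxy => u.injective (Subtype.val_injective hxy)),
      card_univ, Fintype.card_coe]
  let e : {f : {f : α ↪ β // ∀ a ∈ L, f a ∈ S} // resEmb L S f = u} ≃
      ({a // a ∈ Lᶜ} ↪ {b // b ∈ (Finset.univ.image fun x : {x // x ∈ L} => (u x : β))ᶜ}) :=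
    { toFun := fun f => ⟨fun y => ⟨f.1.1 y.1, by
        rw [Finset.mem_compl]
        intro hmem
        obtain ⟨x, -, hx⟩ := Finset.mem_image.1 hmem
        have hux : f.1.1 x.1 = (u x : β) :=
          congrArg Subtype.val (DFunLike.congr_fun f.2 x)
        have : x.1 = y.1 := f.1.1.injective (hux.trans hx)
        exact absurd (this ▸ x.2) (Finset.mem_compl.1 y.2)⟩,
        fun y z h => Subtype.ext (f.1.1.injective (congrArg Subtype.val h))⟩
      invFun := fun v => ⟨⟨⟨fun a => if h : a ∈ L then (u ⟨a, h⟩ : β)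
          else (v ⟨a, Finset.mem_compl.2 h⟩ : β), by
        intro a b hab
        dsimp only at hab
        by_cases ha : a ∈ L <;> by_cases hb : b ∈ L
        · rw [dif_pos ha, dif_pos hb] at hab
          exact congrArg Subtype.val (u.injective (Subtype.ext hab))
        · rw [dif_pos ha, dif_neg hb] at hab
          exact absurd (hab ▸ Finset.mem_image_of_mem (fun x => (u x : β))
            (Finset.mem_univ (⟨a, ha⟩ : {x // x ∈ L}))) (Finset.mem_compl.1 (v ⟨b, Finset.mem_compl.2 hb⟩).2)
        · rw [dif_neg ha, dif_pos hb] at hab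
          exact absurd (hab.symm ▸ Finset.mem_image_of_mem (fun x => (u x : β))
            (Finset.mem_univ (⟨b, hb⟩ : {x // x ∈ L}))) (Finset.mem_compl.1 (v ⟨a, Finset.mem_compl.2 ha⟩).2)
        · rw [dif_neg ha, dif_neg hb] at hab
          exact congrArg Subtype.val (v.injective (Subtype.ext hab))⟩, by
        intro a ha
        show (if h : a ∈ L then (u ⟨a, h⟩ : β) else _) ∈ S
        rw [dif_pos ha]
        exact (u ⟨a, ha⟩).2⟩, by
        apply DFunLike.ext
        intro x
        apply Subtype.ext
        show (if h : x.1 ∈ L then (u ⟨x.1, h⟩ : β) else _) = (u x : β)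
        rw [dif_pos x.2]⟩
      left_inv := fun f => by
        apply Subtype.ext
        apply Subtype.ext
        apply DFunLike.ext
        intro a
        show (if h : a ∈ L then (u ⟨a, h⟩ : β) else f.1.1 a) = f.1.1 a
        by_cases ha : a ∈ L
        · rw [dif_pos ha]
          exact (congrArg Subtype.val (DFunLike.congr_fun f.2 ⟨a, ha⟩)).symm
        · rw [dif_neg ha]
      right_inv := fun v => by
        apply DFunLike.ext
        intro y
        apply Subtype.ext
        show (if h : y.1 ∈ L then (u ⟨y.1, h⟩ : β) else (v ⟨y.1, _⟩ : β)) = (v y : β)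
        rw [dif_neg (Finset.mem_compl.1 y.2)] }
  rw [Fintype.card_congr e, Fintype.card_embedding_eq, Fintype.card_coe, Fintype.card_coe,
    Finset.card_compl, Finset.card_compl, himg]

private lemma card_embedding_constrained (L : Finset α) (S : Finset β) :
    Fintype.card {f : α ↪ β // ∀ a ∈ L, f a ∈ S}
      = S.card.descFactorial L.card *
        (Fintype.card β - L.card).descFactorial (Fintype.card α - L.card) := by
  classical
  rw [← Finset.card_univ,
    Finset.card_eq_sum_card_fiberwise (f := resEmb L S) (t := Finset.univ)
      (fun x _ => Finset.mem_univ _)]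
  have h : ∀ u, ((Finset.univ.filter fun f => resEmb L S f = u)).card
      = (Fintype.card β - L.card).descFactorial (Fintype.card α - L.card) := fun u => by
    rw [← Fintype.card_subtype]; exact card_fiber L S u
  rw [Finset.sum_congr rfl fun u _ => h u, Finset.sum_const, card_univ,
    Fintype.card_embedding_eq, Fintype.card_coe, Fintype.card_coe, smul_eq_mul]

end aux

private lemma card_filter_lt (A Y : ℕ) (h : Y ≤ A) :
    ((Finset.univ : Finset (Fin A)).filter fun v : Fin A => (v : ℕ) < Y).card = Y := by
  rw [← Fintype.card_subtype]
  exact (Fintype.card_congr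
    ⟨fun v => ⟨v.1.1, v.2⟩, fun w => ⟨⟨w.1, lt_of_lt_of_le w.2 h⟩, w.2⟩,
      fun v => rfl, fun w => rfl⟩).trans (Fintype.card_fin Y)

set_option maxHeartbeats 1200000 in
/-- the Phase-1 lower bound `b̲_hm` is at most the inclusion-exclusion
sum `b_hm`. Here `[x]_k` is `Nat.descFactorial x k`. -/
theorem stmt10 (m : ℕ) (hm : 1 ≤ m) (di dj Wij Wji Y1 Y2 h : ℕ)
    (hW1 : Wij ≤ di) (hW2 : Wji ≤ dj)
    (hY1h : Y1 ≤ h) (hY2h : Y2 ≤ h)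
    (hY1 : Y1 ≤ di - Wij) (hY2 : Y2 ≤ dj - Wji) :
    ((Nat.descFactorial (di - Wij) m : ℤ) * (Nat.descFactorial (dj - Wji) m : ℤ))
      - (m : ℤ) * (h : ℤ) ^ 2 * (Nat.descFactorial (di - Wij) (m - 1) : ℤ)
          * (Nat.descFactorial (dj - Wji) (m - 1) : ℤ)
    ≤ ∑ l ∈ Finset.range (m + 1),
        (-1 : ℤ) ^ l * (Nat.choose m l : ℤ)
          * (Nat.descFactorial Y1 l : ℤ) * (Nat.descFactorial Y2 l : ℤ)
          * (Nat.descFactorial (di - Wij - l) (m - l) : ℤ)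
          * (Nat.descFactorial (dj - Wji - l) (m - l) : ℤ) := by
  classical
  set A := di - Wij with hAdef
  set B := dj - Wji with hBdef
  let bad : (Fin m ↪ Fin A) × (Fin m ↪ Fin B) → Finset (Fin m) :=
    fun x => Finset.univ.filter fun i => (x.1 i : ℕ) < Y1 ∧ (x.2 i : ℕ) < Y2
  have hbad : ∀ (L : Finset (Fin m)) (x : (Fin m ↪ Fin A) × (Fin m ↪ Fin B)),
      L ⊆ bad x ↔ ∀ i ∈ L, ((x.1 i : ℕ) < Y1 ∧ (x.2 i : ℕ) < Y2) := by
    intro L x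
    simp [bad, Finset.subset_iff]
  have hcap : ∀ L : Finset (Fin m),
      Fintype.card {x : (Fin m ↪ Fin A) × (Fin m ↪ Fin B) // L ⊆ bad x}
        = (Y1.descFactorial L.card * (A - L.card).descFactorial (m - L.card))
          * (Y2.descFactorial L.card * (B - L.card).descFactorial (m - L.card)) := by
    intro L
    have hsplit : ∀ x : (Fin m ↪ Fin A) × (Fin m ↪ Fin B),
        (L ⊆ bad x) ↔ ((∀ i ∈ L, x.1 i ∈ (Finset.univ.filter fun v : Fin A => (v : ℕ) < Y1))
          ∧ (∀ i ∈ L, x.2 i ∈ (Finset.univ.filter fun v : Fin B => (v : ℕ) < Y2))) := by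
      intro x
      rw [hbad]
      simp only [Finset.mem_filter, Finset.mem_univ, true_and]
      exact ⟨fun hh => ⟨fun i hi => (hh i hi).1, fun i hi => (hh i hi).2⟩,
        fun hh i hi => ⟨hh.1 i hi, hh.2 i hi⟩⟩
    have e := (Equiv.subtypeEquivRight hsplit).trans
      (Equiv.subtypeProdEquivProd
        (p := fun f : Fin m ↪ Fin A =>
          ∀ i ∈ L, f i ∈ (Finset.univ.filter fun v : Fin A => (v : ℕ) < Y1))
        (q := fun g : Fin m ↪ Fin B =>
          ∀ i ∈ L, g i ∈ (Finset.univ.filter fun v : Fin B => (v : ℕ) < Y2)))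
    have c1 := card_embedding_constrained L (Finset.univ.filter fun v : Fin A => (v : ℕ) < Y1)
    have c2 := card_embedding_constrained L (Finset.univ.filter fun v : Fin B => (v : ℕ) < Y2)
    rw [card_filter_lt A Y1 hY1, Fintype.card_fin, Fintype.card_fin] at c1
    rw [card_filter_lt B Y2 hY2, Fintype.card_fin, Fintype.card_fin] at c2
    rw [Fintype.card_congr e, Fintype.card_prod]
    congr 1
    · convert c1 using 2
    · convert c2 using 2
  have key : (∑ l ∈ Finset.range (m + 1),
        (-1 : ℤ) ^ l * (Nat.choose m l : ℤ)
          * (Nat.descFactorial Y1 l : ℤ) * (Nat.descFactorial Y2 l : ℤ)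
          * (Nat.descFactorial (A - l) (m - l) : ℤ)
          * (Nat.descFactorial (B - l) (m - l) : ℤ))
      = ∑ x : (Fin m ↪ Fin A) × (Fin m ↪ Fin B), (if bad x = ∅ then (1 : ℤ) else 0) := by
    have step1 : ∀ l ∈ Finset.range (m + 1),
        (-1 : ℤ) ^ l * (Nat.choose m l : ℤ)
          * (Nat.descFactorial Y1 l : ℤ) * (Nat.descFactorial Y2 l : ℤ)
          * (Nat.descFactorial (A - l) (m - l) : ℤ)
          * (Nat.descFactorial (B - l) (m - l) : ℤ)
        = ∑ L ∈ Finset.powersetCard l (Finset.univ : Finset (Fin m)),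
            (-1 : ℤ) ^ L.card
              * (Fintype.card {x : (Fin m ↪ Fin A) × (Fin m ↪ Fin B) // L ⊆ bad x} : ℤ) := by
      intro l _
      rw [Finset.sum_congr rfl (fun L hL => by
          rw [hcap L, (Finset.mem_powersetCard.1 hL).2]),
        Finset.sum_const, Finset.card_powersetCard, Finset.card_univ, Fintype.card_fin,
        nsmul_eq_mul]
      push_cast
      ring
    rw [Finset.sum_congr rfl step1]
    have step2 := Finset.sum_powerset (Finset.univ : Finset (Fin m))
      (fun L => (-1 : ℤ) ^ L.card
        * (Fintype.card {x : (Fin m ↪ Fin A) × (Fin m ↪ Fin B) // L ⊆ bad x} : ℤ))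
    rw [Finset.card_univ, Fintype.card_fin] at step2
    rw [← step2]
    have step3 : ∀ L ∈ (Finset.univ : Finset (Fin m)).powerset,
        (-1 : ℤ) ^ L.card
            * (Fintype.card {x : (Fin m ↪ Fin A) × (Fin m ↪ Fin B) // L ⊆ bad x} : ℤ)
        = ∑ x : (Fin m ↪ Fin A) × (Fin m ↪ Fin B),
            (if L ⊆ bad x then (-1 : ℤ) ^ L.card else 0) := by
      intro L _
      rw [Fintype.card_subtype, ← Finset.sum_boole, Finset.mul_sum]
      exact Finset.sum_congr rfl fun x _ => by split_ifs <;> ring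
    rw [Finset.sum_congr rfl step3, Finset.sum_comm]
    refine Finset.sum_congr rfl fun x _ => ?_
    rw [← Finset.sum_filter]
    have hfe : (Finset.univ : Finset (Fin m)).powerset.filter (fun L => L ⊆ bad x)
        = (bad x).powerset := by
      ext L
      simp [Finset.mem_powerset, Finset.mem_filter, Finset.subset_univ]
    rw [hfe, Finset.sum_powerset_neg_one_pow_card]
  have hineq : ∑ x : (Fin m ↪ Fin A) × (Fin m ↪ Fin B), (1 - ((bad x).card : ℤ))
      ≤ ∑ x : (Fin m ↪ Fin A) × (Fin m ↪ Fin B), (if bad x = ∅ then (1 : ℤ) else 0) := by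
    apply Finset.sum_le_sum
    intro x _
    by_cases hx : bad x = ∅
    · simp [hx]
    · have h1 : 1 ≤ (bad x).card := Finset.card_pos.2 (Finset.nonempty_iff_ne_empty.2 hx)
      have h2 : (1 : ℤ) ≤ ((bad x).card : ℤ) := by exact_mod_cast h1
      rw [if_neg hx]
      linarith
  have hsum1 : ∑ x : (Fin m ↪ Fin A) × (Fin m ↪ Fin B), (1 - ((bad x).card : ℤ))
      = (A.descFactorial m : ℤ) * (B.descFactorial m : ℤ)
        - ∑ x : (Fin m ↪ Fin A) × (Fin m ↪ Fin B), ((bad x).card : ℤ) := by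
    rw [Finset.sum_sub_distrib, Finset.sum_const, Finset.card_univ, Fintype.card_prod,
      Fintype.card_embedding_eq, Fintype.card_embedding_eq, Fintype.card_fin, Fintype.card_fin,
      Fintype.card_fin, nsmul_eq_mul, mul_one]
    push_cast
    ring
  have hbadsum : ∑ x : (Fin m ↪ Fin A) × (Fin m ↪ Fin B), ((bad x).card : ℤ)
      = (m : ℤ) * (((Y1 * (A - 1).descFactorial (m - 1))
          * (Y2 * (B - 1).descFactorial (m - 1)) : ℕ) : ℤ) := by
    have hx : ∀ x : (Fin m ↪ Fin A) × (Fin m ↪ Fin B),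
        ((bad x).card : ℤ) = ∑ i : Fin m, (if i ∈ bad x then (1 : ℤ) else 0) := by
      intro x
      rw [Finset.sum_boole]
      congr 1
      rw [Finset.filter_mem_eq_inter, Finset.univ_inter]
    rw [Finset.sum_congr rfl fun x _ => hx x, Finset.sum_comm]
    have hi : ∀ i : Fin m, (∑ x : (Fin m ↪ Fin A) × (Fin m ↪ Fin B),
          (if i ∈ bad x then (1 : ℤ) else 0))
        = (((Y1 * (A - 1).descFactorial (m - 1))
            * (Y2 * (B - 1).descFactorial (m - 1)) : ℕ) : ℤ) := by
      intro i
      rw [Finset.sum_boole]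
      have hcc : (Finset.univ.filter fun x : (Fin m ↪ Fin A) × (Fin m ↪ Fin B) => i ∈ bad x).card
          = Fintype.card {x : (Fin m ↪ Fin A) × (Fin m ↪ Fin B) // ({i} : Finset (Fin m)) ⊆ bad x} := by
        rw [Fintype.card_subtype]
        congr 1
        ext x
        simp [Finset.singleton_subset_iff]
      rw [hcc, hcap]
      simp [Nat.descFactorial_one]
    rw [Finset.sum_congr rfl fun i _ => hi i, Finset.sum_const, Finset.card_univ,
      Fintype.card_fin, nsmul_eq_mul]
  calc ((A.descFactorial m : ℤ) * (B.descFactorial m : ℤ))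
      - (m : ℤ) * (h : ℤ) ^ 2 * (A.descFactorial (m - 1) : ℤ) * (B.descFactorial (m - 1) : ℤ)
      ≤ ∑ x : (Fin m ↪ Fin A) × (Fin m ↪ Fin B), (1 - ((bad x).card : ℤ)) := by
        rw [hsum1, hbadsum]
        have hnat : (Y1 * (A - 1).descFactorial (m - 1)) * (Y2 * (B - 1).descFactorial (m - 1))
            ≤ (h * A.descFactorial (m - 1)) * (h * B.descFactorial (m - 1)) :=
          Nat.mul_le_mul (Nat.mul_le_mul hY1h (Nat.descFactorial_le _ (Nat.sub_le A 1)))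
            (Nat.mul_le_mul hY2h (Nat.descFactorial_le _ (Nat.sub_le B 1)))
        have hz : ((((Y1 * (A - 1).descFactorial (m - 1))
            * (Y2 * (B - 1).descFactorial (m - 1))) : ℕ) : ℤ)
            ≤ (((h * A.descFactorial (m - 1)) * (h * B.descFactorial (m - 1)) : ℕ) : ℤ) := by
          exact_mod_cast hnat
        have hm0 : (0 : ℤ) ≤ (m : ℤ) := Int.natCast_nonneg m
        have := mul_le_mul_of_nonneg_left hz hm0
        apply sub_le_sub_left
        calc (m : ℤ) * (((Y1 * (A - 1).descFactorial (m - 1))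
              * (Y2 * (B - 1).descFactorial (m - 1)) : ℕ) : ℤ)
            ≤ (m : ℤ) * (((h * A.descFactorial (m - 1))
              * (h * B.descFactorial (m - 1)) : ℕ) : ℤ) := this
          _ = (m : ℤ) * (h : ℤ) ^ 2 * (A.descFactorial (m - 1) : ℤ)
              * (B.descFactorial (m - 1) : ℤ) := by push_cast; ring
    _ ≤ ∑ x : (Fin m ↪ Fin A) × (Fin m ↪ Fin B), (if bad x = ∅ then (1 : ℤ) else 0) := hineq
    _ = _ := key.symm
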